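/- arXiv:0912.0537 — 3 statements merged into one kernel-verified Lean document; each statement's English description precedes it below -/
import Mathlib

section
/- Let G be a 2-connected 3-regular graph, let {uv, xy} be a pair of edges whose removal disconnects G into two components, with u,x in one component and v,y in the other. Form G₁ from the component containing u,x by adding the edge ux, and G₂ from the other component by adding the edge vy. Then G is bipartite if and only if both G₁ and G₂ are bipartite. -/
open Equiv

namespace Orth

/-- The setoid of "being on the same cycle" of a permutation. -/
def cycleSetoid {D : Type*} (f : Equiv.Perm D) : Setoid D :=
  ⟨f.SameCycle,
    ⟨fun x => Equiv.Perm.SameCycle.refl f x, fun h => h.symm, fun h h' => h.trans h'⟩⟩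

/-- The number of orbits (cycles, including fixed points) of a permutation. -/
noncomputable def orbCount {D : Type*} (f : Equiv.Perm D) : ℕ :=
  Nat.card (Quotient (cycleSetoid f))

/-- A plane graph: a finite combinatorial map (darts with vertex-rotation `σ` and
edge-involution `α`) of genus 0, i.e. satisfying Euler's formula `V - E + F = 2`.
Vertices are the orbits of `σ`, edges the orbits of `α`, faces the orbits of `σ * α`. -/
structure PlaneGraph where
  D : Type
  fin : Finite D
  nonempty : Nonempty D
  σ : Equiv.Perm D
  α : Equiv.Perm D
  α_invol : ∀ d, α (α d) = d
  α_ne : ∀ d, α d ≠ d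
  sphere : orbCount σ + orbCount (σ * α) = orbCount α + 2

namespace PlaneGraph

variable (M : PlaneGraph)

/-- Vertices of a plane graph. -/
def Vset : Type := Quotient (cycleSetoid M.σ)

/-- Faces of a plane graph. -/
def Fc : Type := Quotient (cycleSetoid (M.σ * M.α))

/-- Edges of a plane graph. -/
def Eset : Type := Quotient (cycleSetoid M.α)

def vertexOf (d : M.D) : M.Vset := Quotient.mk (cycleSetoid M.σ) d
def faceOf (d : M.D) : M.Fc := Quotient.mk (cycleSetoid (M.σ * M.α)) d
def edgeOf (d : M.D) : M.Eset := Quotient.mk (cycleSetoid M.α) d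

/-- Degree of a vertex: the number of darts at it (loops count twice). -/
noncomputable def degree (v : M.Vset) : ℕ := Nat.card {d : M.D // M.vertexOf d = v}

/-- Length of a face: the number of darts on its boundary walk
(so a bridge on the face is counted twice). -/
noncomputable def faceLen (f : M.Fc) : ℕ := Nat.card {d : M.D // M.faceOf d = f}

/-- Connectivity of the plane graph: any dart is reachable from any other using `σ` and `α`. -/
def Connected : Prop :=
  ∀ d d' : M.D, Relation.ReflTransGen (fun a b => b = M.σ a ∨ b = M.α a) d d'

/-- Bipartiteness: a proper 2-coloring of the vertices. -/
def Bipartite : Prop :=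
  ∃ c : M.Vset → Bool, ∀ d : M.D, c (M.vertexOf d) ≠ c (M.vertexOf (M.α d))

/-- Eulerian: connected with all vertex degrees even. -/
def Eulerian : Prop := M.Connected ∧ ∀ v : M.Vset, Even (M.degree v)

/-- The planar dual: faces become vertices, with one dual edge per primal edge. -/
def dual : PlaneGraph where
  D := M.D
  fin := M.fin
  nonempty := M.nonempty
  σ := M.σ * M.α
  α := M.α
  α_invol := M.α_invol
  α_ne := M.α_ne
  sphere := by
    have h : M.σ * M.α * M.α = M.σ := by
      ext d
      simp [Equiv.Perm.mul_apply, M.α_invol]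
    rw [h]
    have := M.sphere
    omega

/-- Vertex `v` lies on face `f`. -/
def vOnFace (v : M.Vset) (f : M.Fc) : Prop := ∃ d, M.vertexOf d = v ∧ M.faceOf d = f

/-- Edge `e` lies on face `f`. -/
def eOnFace (e : M.Eset) (f : M.Fc) : Prop := ∃ d, M.edgeOf d = e ∧ M.faceOf d = f

/-- Vertex `v` is an endpoint of edge `e`. -/
def vOnEdge (v : M.Vset) (e : M.Eset) : Prop := ∃ d, M.vertexOf d = v ∧ M.edgeOf d = e

/-- Simplicity: no loops and no parallel edges. -/
def Simple : Prop :=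
  (∀ d, M.vertexOf (M.α d) ≠ M.vertexOf d) ∧
  ∀ d d' : M.D, M.vertexOf d = M.vertexOf d' → M.vertexOf (M.α d) = M.vertexOf (M.α d') →
    M.edgeOf d = M.edgeOf d'

/-- The underlying simple graph of a plane graph. -/
def graph : SimpleGraph M.Vset where
  Adj u v := u ≠ v ∧ ∃ d, M.vertexOf d = u ∧ M.vertexOf (M.α d) = v
  symm := by
    constructor
    rintro u v ⟨huv, d, h1, h2⟩
    refine ⟨huv.symm, M.α d, h2, ?_⟩
    rw [show M.α (M.α d) = d from M.α_invol d]
    exact h1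
  loopless := by
    constructor
    rintro v ⟨h, -⟩
    exact h rfl

/-- A rainbow partition: each edge gets one of three colors, every face carries all
three colors, around each vertex the colors of consecutive edges alternate between
exactly two colors, and adjacent vertices alternate between different pairs of colors. -/
structure IsRainbow (col : M.D → Fin 3) : Prop where
  edge_consistent : ∀ d, col (M.α d) = col d
  face_all : ∀ (f : M.Fc) (c : Fin 3), ∃ d, M.faceOf d = f ∧ col d = c
  alt_ne : ∀ d, col (M.σ d) ≠ col d
  alt_per : ∀ d, col (M.σ (M.σ d)) = col d
  adj_pairs : ∀ d, col (M.σ d) ≠ col (M.σ (M.α d))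

/-- The monochromatic subgraph of color `x` (as a graph on all vertices). -/
def colorGraph (col : M.D → Fin 3) (x : Fin 3) : SimpleGraph M.Vset where
  Adj u v := u ≠ v ∧ ∃ d, col d = x ∧
    ((M.vertexOf d = u ∧ M.vertexOf (M.α d) = v) ∨
     (M.vertexOf d = v ∧ M.vertexOf (M.α d) = u))
  symm := by
    constructor
    rintro u v ⟨huv, d, hc, h⟩
    exact ⟨huv.symm, d, hc, h.symm⟩
  loopless := by
    constructor
    rintro v ⟨h, -⟩
    exact h rfl

/-- Vertices incident to an edge of color `x`. -/
def colorSupp (col : M.D → Fin 3) (x : Fin 3) : Set M.Vset :=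
  {v | ∃ d, col d = x ∧ M.vertexOf d = v}

end PlaneGraph

/-- 3-connectivity: at least 4 vertices and no cutset of size at most 2. -/
def ThreeConnected {V : Type*} (G : SimpleGraph V) : Prop :=
  4 ≤ Nat.card V ∧ ∀ s : Set V, s.ncard ≤ 2 → (G.induce sᶜ).Connected

/-- 2-connectivity: at least 3 vertices, connected, and no cut vertex. -/
def TwoConnected {V : Type*} (G : SimpleGraph V) : Prop :=
  3 ≤ Nat.card V ∧ G.Connected ∧ ∀ v : V, (G.induce ({v}ᶜ : Set V)).Connected

end Orth


section StmtNineAux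

open Finset

lemma bool_ne_not {a b : Bool} (h : a ≠ b) : b = !a := by cases a <;> cases b <;> simp_all

lemma split_key {V : Type*} [Fintype V] (G : SimpleGraph V)
    (hreg : ∀ v : V, Nat.card {w : V // G.Adj v w} = 3)
    (u v x y : V) (huv : G.Adj u v) (hxy : G.Adj x y)
    (S : Set V) (hu : u ∈ S) (hx : x ∈ S) (hv : v ∉ S) (hy : y ∉ S)
    (hsplit : ∀ a b : V, G.Adj a b → a ∈ S → b ∉ S → (a = u ∧ b = v) ∨ (a = x ∧ b = y))
    (c : V → Bool) (hc : ∀ a b, G.Adj a b → c a ≠ c b) : c u ≠ c x := by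
  classical
  intro hcontra
  set A : Bool → Finset V := fun b => univ.filter (fun a => a ∈ S ∧ c a = b) with hA
  set din : V → Finset V :=
    fun a => (univ.filter (fun w => G.Adj a w)).filter (fun w => w ∈ S) with hdin
  set dout : V → Finset V :=
    fun a => (univ.filter (fun w => G.Adj a w)).filter (fun w => w ∉ S) with hdout
  set P : Bool → Finset (V × V) := fun b =>
    univ.filter (fun p => p.1 ∈ S ∧ p.2 ∈ S ∧ G.Adj p.1 p.2 ∧ c p.1 = b) with hP
  have hdeg : ∀ a : V, (univ.filter (fun w => G.Adj a w)).card = 3 := by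
    intro a
    have h := hreg a
    rwa [Nat.card_eq_fintype_card, Fintype.card_subtype] at h
  have hsplitdeg : ∀ a : V, (din a).card + (dout a).card = 3 := by
    intro a
    rw [← hdeg a, hdin, hdout]
    exact Finset.card_filter_add_card_filter_not (fun w => w ∈ S)
  -- E1 : fiberwise count
  have hE1 : ∀ b, (P b).card = ∑ a ∈ A b, (din a).card := by
    intro b
    rw [Finset.card_eq_sum_card_fiberwise (f := Prod.fst) (t := A b)
      (by intro p hp; have hp' := (Finset.mem_filter.1 (show p ∈ P b from hp)).2
          exact Finset.mem_filter.2 ⟨Finset.mem_univ _, hp'.1, hp'.2.2.2⟩)]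
    refine Finset.sum_congr rfl fun a ha => ?_
    refine Finset.card_bij (fun p _ => p.2) ?_ ?_ ?_
    · intro p hp
      simp only [hP, hdin, mem_filter, mem_univ, true_and] at hp ⊢
      obtain ⟨⟨h1, h2, h3, h4⟩, h5⟩ := hp
      subst h5
      exact ⟨h3, h2⟩
    · intro p hp q hq hpq
      simp only [hP, mem_filter] at hp hq
      exact Prod.ext (hp.2.trans hq.2.symm) hpq
    · intro w hw
      simp only [hA, mem_filter, mem_univ, true_and] at ha
      simp only [hdin, mem_filter, mem_univ, true_and] at hw
      refine ⟨(a, w), ?_, rfl⟩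
      simp only [hP, mem_filter, mem_univ, true_and]
      exact ⟨⟨ha.1, hw.2, hw.1, ha.2⟩, trivial⟩
  -- E2 : swap bijection
  have hE2 : (P (c u)).card = (P (!(c u))).card := by
    refine Finset.card_bij (fun p _ => p.swap) ?_ ?_ ?_
    · intro p hp
      simp only [hP, mem_filter, mem_univ, true_and] at hp ⊢
      obtain ⟨h1, h2, h3, h4⟩ := hp
      refine ⟨h2, h1, h3.symm, ?_⟩
      have h5 := hc p.1 p.2 h3
      rw [h4] at h5
      exact bool_ne_not h5
    · intro p hp q hq hpq
      exact Prod.swap_injective hpq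
    · intro q hq
      refine ⟨q.swap, ?_, by simp⟩
      simp only [hP, mem_filter, mem_univ, true_and, Prod.fst_swap, Prod.snd_swap] at hq ⊢
      obtain ⟨h1, h2, h3, h4⟩ := hq
      refine ⟨h2, h1, h3.symm, ?_⟩
      have h5 : c q.2 = !(c q.1) := bool_ne_not (hc q.1 q.2 h3)
      rw [h5, h4, Bool.not_not]
  -- E3
  have hE3 : ∀ b, (∑ a ∈ A b, (din a).card) + (∑ a ∈ A b, (dout a).card)
      = 3 * (A b).card := by
    intro b
    rw [← Finset.sum_add_distrib,
      Finset.sum_congr rfl (fun a _ => hsplitdeg a), Finset.sum_const, smul_eq_mul,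
      mul_comm]
  -- the out-sum on the opposite side is zero
  have hT0 : ∑ a ∈ A (!(c u)), (dout a).card = 0 := by
    refine Finset.sum_eq_zero fun a ha => ?_
    rw [Finset.card_eq_zero]
    by_contra hne
    obtain ⟨w, hw⟩ := Finset.nonempty_iff_ne_empty.2 hne
    simp only [hdout, mem_filter, mem_univ, true_and] at hw
    simp only [hA, mem_filter, mem_univ, true_and] at ha
    rcases hsplit a w hw.1 ha.1 hw.2 with ⟨h1, _⟩ | ⟨h1, _⟩
    · rw [h1] at ha; simp at ha
    · rw [h1, ← hcontra] at ha; simp at ha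
  -- support and bounds for out-degrees
  have hdoutmem : ∀ a w, w ∈ dout a ↔ (w ∉ S ∧ G.Adj a w) := by
    intro a w; simp only [hdout, mem_filter, mem_univ, true_and]; tauto
  have hsupp : ∀ a : V, a ∈ S → a ∉ ({u, x} : Finset V) → (dout a).card = 0 := by
    intro a haS ha
    rw [Finset.card_eq_zero]
    by_contra hne
    obtain ⟨w, hw⟩ := Finset.nonempty_iff_ne_empty.2 hne
    rw [hdoutmem] at hw
    rcases hsplit a w hw.2 haS hw.1 with ⟨h1, _⟩ | ⟨h1, _⟩ <;> simp [h1] at ha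
  have huxA : ({u, x} : Finset V) ⊆ A (c u) := by
    intro a ha
    simp only [mem_insert, mem_singleton] at ha
    simp only [hA, mem_filter, mem_univ, true_and]
    rcases ha with rfl | rfl
    · exact ⟨hu, rfl⟩
    · exact ⟨hx, hcontra.symm⟩
  have hTsum : ∑ a ∈ A (c u), (dout a).card = ∑ a ∈ ({u, x} : Finset V), (dout a).card := by
    refine (Finset.sum_subset huxA fun a ha hna => ?_).symm
    have haS : a ∈ S := by
      simp only [hA, mem_filter, mem_univ, true_and] at ha; exact ha.1
    exact hsupp a haS hna
  -- bounds on T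
  have hvmem : v ∈ dout u := (hdoutmem u v).2 ⟨hv, huv⟩
  have hT : 1 ≤ ∑ a ∈ ({u, x} : Finset V), (dout a).card ∧
      ∑ a ∈ ({u, x} : Finset V), (dout a).card ≤ 2 := by
    by_cases hux : u = x
    · subst hux
      have hsub : dout u ⊆ ({v, y} : Finset V) := by
        intro w hw
        rw [hdoutmem] at hw
        rcases hsplit u w hw.2 hu hw.1 with ⟨_, h2⟩ | ⟨_, h2⟩ <;> simp [h2]
      have hle : (dout u).card ≤ 2 := le_trans (Finset.card_le_card hsub)
        (le_trans (Finset.card_insert_le _ _) (by simp))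
      have hge : 1 ≤ (dout u).card := Finset.card_pos.2 ⟨v, hvmem⟩
      have hpair : ({u, u} : Finset V) = {u} := by simp
      rw [hpair, Finset.sum_singleton]
      exact ⟨hge, hle⟩
    · rw [Finset.sum_pair hux]
      have h1 : dout u ⊆ ({v} : Finset V) := by
        intro w hw
        rw [hdoutmem] at hw
        rcases hsplit u w hw.2 hu hw.1 with ⟨_, h2⟩ | ⟨h2, _⟩
        · simp [h2]
        · exact absurd h2 hux
      have h2 : dout x ⊆ ({y} : Finset V) := by
        intro w hw
        rw [hdoutmem] at hw
        rcases hsplit x w hw.2 hx hw.1 with ⟨h2, _⟩ | ⟨_, h2⟩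
        · exact absurd h2.symm hux
        · simp [h2]
      have hle1 : (dout u).card ≤ 1 := le_trans (Finset.card_le_card h1) (by simp)
      have hle2 : (dout x).card ≤ 1 := le_trans (Finset.card_le_card h2) (by simp)
      have hge : 1 ≤ (dout u).card := Finset.card_pos.2 ⟨v, hvmem⟩
      omega
  -- put it together
  have e1 := hE3 (c u)
  have e2 := hE3 (!(c u))
  rw [← hE1 (c u)] at e1
  rw [← hE1 (!(c u)), hT0, Nat.add_zero] at e2
  rw [hTsum] at e1
  rw [hE2] at e1
  omega

end StmtNineAux

/-- Let G be a 2-connected 3-regular graph, split by the edge pair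
{uv, xy} into two components: S (containing u and x) and its complement (containing v
and y), with no other edges crossing. Then G is bipartite if and only if both split
components (with the virtual edges ux resp. vy added) are bipartite. -/
theorem stmt9 {V : Type*} [Fintype V] (G : SimpleGraph V)
    (h2c : Orth.TwoConnected G)
    (hreg : ∀ v : V, Nat.card {w : V // G.Adj v w} = 3)
    (u v x y : V) (huv : G.Adj u v) (hxy : G.Adj x y)
    (S : Set V) (hu : u ∈ S) (hx : x ∈ S) (hv : v ∉ S) (hy : y ∉ S)
    (hsplit : ∀ a b : V, G.Adj a b → a ∈ S → b ∉ S → (a = u ∧ b = v) ∨ (a = x ∧ b = y))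
    (hS : (G.induce S).Connected) (hSc : (G.induce Sᶜ).Connected) :
    (∃ c : V → Bool, ∀ a b : V, G.Adj a b → c a ≠ c b) ↔
      ((∃ c : V → Bool, (∀ a b : V, a ∈ S → b ∈ S → G.Adj a b → c a ≠ c b) ∧ c u ≠ c x) ∧
       (∃ c : V → Bool, (∀ a b : V, a ∉ S → b ∉ S → G.Adj a b → c a ≠ c b) ∧ c v ≠ c y)) := by
  classical
  constructor
  · rintro ⟨c, hc⟩
    have hux : c u ≠ c x :=
      split_key G hreg u v x y huv hxy S hu hx hv hy hsplit c hc
    refine ⟨⟨c, fun a b _ _ h => hc a b h, hux⟩,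
            ⟨c, fun a b _ _ h => hc a b h, ?_⟩⟩
    have h1 := hc u v huv
    have h2 := hc x y hxy
    revert h1 h2 hux
    cases c u <;> cases c v <;> cases c x <;> cases c y <;> simp
  · rintro ⟨⟨c1, hc1, hux⟩, ⟨c2, hc2, hvy⟩⟩
    set c2' : V → Bool := if c2 v = c1 u then (fun a => !(c2 a)) else c2 with hc2'def
    have hc2'prop : ∀ a b : V, a ∉ S → b ∉ S → G.Adj a b → c2' a ≠ c2' b := by
      intro a b ha hb hab
      by_cases h : c2 v = c1 u <;> simp only [hc2'def, h, if_true, if_false, if_pos, if_neg] <;>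
        simp [hc2 a b ha hb hab]
    have hc2'v : c2' v = !(c1 u) := by
      by_cases h : c2 v = c1 u
      · simp [hc2'def, h]
      · simp only [hc2'def, if_neg h]
        exact bool_ne_not (Ne.symm h)
    have hc2'y : c2' y = c1 u := by
      have h5 : c2' y = !(c2' v) := by
        by_cases h : c2 v = c1 u
        · simp only [hc2'def, if_pos h]
          have := bool_ne_not hvy
          rw [this, Bool.not_not]
        · simp only [hc2'def, if_neg h]
          exact bool_ne_not hvy
      rw [h5, hc2'v, Bool.not_not]
    refine ⟨fun a => if a ∈ S then c1 a else c2' a, fun a b hab => ?_⟩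
    by_cases ha : a ∈ S <;> by_cases hb : b ∈ S <;>
      simp only [if_pos, if_neg, ha, hb, if_true, if_false]
    · exact hc1 a b ha hb hab
    · rcases hsplit a b hab ha hb with ⟨rfl, rfl⟩ | ⟨rfl, rfl⟩
      · rw [hc2'v]; simp
      · rw [hc2'y]; exact hux.symm
    · rcases hsplit b a hab.symm hb ha with ⟨rfl, rfl⟩ | ⟨rfl, rfl⟩
      · rw [hc2'v]; simp
      · rw [hc2'y]; exact hux
    · exact hc2'prop a b ha hb hab
end

section
/- Let Δ be a maximal planar graph whose edges are partitioned into three color classes (red, blue, green) such that every triangular face contains one edge of each color and such that around every vertex the edges alternate in cyclic order between exactly two of the colors, with adjacent vertices alternating between different pairs of colors. Then every 4-cycle in Δ is colored either with all four edges the same color, or with two colors in the cyclic pattern red–red–blue–blue (two consecutive edges of one color followed by two consecutive edges of another). In particular, no 4-cycle has color pattern red–blue–red–blue, red–blue–red–green, or red–red–blue–green. -/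
open Equiv

section Aux

/-- The "missing color" at the vertex of a dart: the color not appearing
among the alternating colors around that vertex. -/
def missCol (M : Orth.PlaneGraph) (col : M.D → Fin 3) (d : M.D) : Fin 3 :=
  -(col d + col (M.σ d))

lemma missCol_sigma (M : Orth.PlaneGraph) (col : M.D → Fin 3) (hrb : M.IsRainbow col)
    (d : M.D) : missCol M col (M.σ d) = missCol M col d := by
  unfold missCol
  rw [hrb.alt_per d]
  rw [add_comm]

lemma missCol_sigma_inv (M : Orth.PlaneGraph) (col : M.D → Fin 3) (hrb : M.IsRainbow col)
    (d : M.D) : missCol M col (M.σ⁻¹ d) = missCol M col d := by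
  have := missCol_sigma M col hrb (M.σ⁻¹ d)
  rw [show M.σ (M.σ⁻¹ d) = d from M.σ.apply_symm_apply d] at this; exact this.symm

lemma missCol_sameCycle (M : Orth.PlaneGraph) (col : M.D → Fin 3) (hrb : M.IsRainbow col)
    {d d' : M.D} (h : M.σ.SameCycle d d') : missCol M col d = missCol M col d' := by
  obtain ⟨i, rfl⟩ := h
  induction i using Int.induction_on with
  | zero => simp
  | succ k ih =>
      have : (M.σ ^ ((k : ℤ) + 1)) d = M.σ ((M.σ ^ (k : ℤ)) d) := by
        rw [add_comm, zpow_add, zpow_one, Equiv.Perm.mul_apply]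
      rw [this, missCol_sigma M col hrb, ← ih]
  | pred k ih =>
      have : (M.σ ^ (-(k : ℤ) - 1)) d = M.σ⁻¹ ((M.σ ^ (-(k : ℤ))) d) := by
        rw [sub_eq_add_neg, add_comm, zpow_add, Equiv.Perm.mul_apply, zpow_neg_one]
      rw [this, missCol_sigma_inv M col hrb, ← ih]

lemma missCol_of_vertexOf_eq (M : Orth.PlaneGraph) (col : M.D → Fin 3)
    (hrb : M.IsRainbow col) {d d' : M.D} (h : M.vertexOf d = M.vertexOf d') :
    missCol M col d = missCol M col d' :=
  missCol_sameCycle M col hrb (Quotient.exact h)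

lemma fin3_ne_aux : ∀ a b : Fin 3, a ≠ b → a ≠ -(a + b) ∧ b ≠ -(a + b) := by decide

lemma col_ne_missCol (M : Orth.PlaneGraph) (col : M.D → Fin 3) (hrb : M.IsRainbow col)
    (d : M.D) : col d ≠ missCol M col d :=
  (fin3_ne_aux (col d) (col (M.σ d)) (hrb.alt_ne d).symm).1

lemma missCol_alpha_ne (M : Orth.PlaneGraph) (col : M.D → Fin 3) (hrb : M.IsRainbow col)
    (d : M.D) : missCol M col d ≠ missCol M col (M.α d) := by
  unfold missCol
  rw [hrb.edge_consistent d]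
  intro h
  exact hrb.adj_pairs d (add_left_cancel (neg_inj.mp h))

lemma fin3_key : ∀ c0 c1 c2 c3 P0 P1 P2 P3 : Fin 3,
    P0 ≠ P1 → P1 ≠ P2 → P2 ≠ P3 → P3 ≠ P0 →
    c0 ≠ P0 → c0 ≠ P1 → c1 ≠ P1 → c1 ≠ P2 →
    c2 ≠ P2 → c2 ≠ P3 → c3 ≠ P3 → c3 ≠ P0 →
    (c0 = c1 ∧ c1 = c2 ∧ c2 = c3) ∨
    (c0 = c1 ∧ c2 = c3 ∧ c0 ≠ c2) ∨
    (c1 = c2 ∧ c3 = c0 ∧ c1 ≠ c3) := by decide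

end Aux

/-- In a maximal planar graph with a rainbow partition of its edges into
three colors, every 4-cycle is colored either with all four edges the same color, or
with two colors in the cyclic pattern c–c–c'–c' (two consecutive edges of one color
followed by two consecutive edges of another). -/
theorem stmt12 (M : Orth.PlaneGraph) (hs : M.Simple) (hk : 4 ≤ Nat.card M.Vset)
    (htri : ∀ f : M.Fc, M.faceLen f = 3)
    (col : M.D → Fin 3) (hrb : M.IsRainbow col)
    (d₀ d₁ d₂ d₃ : M.D)
    (h01 : M.vertexOf (M.α d₀) = M.vertexOf d₁)
    (h12 : M.vertexOf (M.α d₁) = M.vertexOf d₂)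
    (h23 : M.vertexOf (M.α d₂) = M.vertexOf d₃)
    (h30 : M.vertexOf (M.α d₃) = M.vertexOf d₀)
    (hdist : [M.vertexOf d₀, M.vertexOf d₁, M.vertexOf d₂, M.vertexOf d₃].Nodup) :
    (col d₀ = col d₁ ∧ col d₁ = col d₂ ∧ col d₂ = col d₃) ∨
    (col d₀ = col d₁ ∧ col d₂ = col d₃ ∧ col d₀ ≠ col d₂) ∨
    (col d₁ = col d₂ ∧ col d₃ = col d₀ ∧ col d₁ ≠ col d₃) := by
  set m := missCol M col with hm
  -- pair (encoded by missing color) at each vertex of the cycle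
  have e01 : m (M.α d₀) = m d₁ := missCol_of_vertexOf_eq M col hrb h01
  have e12 : m (M.α d₁) = m d₂ := missCol_of_vertexOf_eq M col hrb h12
  have e23 : m (M.α d₂) = m d₃ := missCol_of_vertexOf_eq M col hrb h23
  have e30 : m (M.α d₃) = m d₀ := missCol_of_vertexOf_eq M col hrb h30
  have P01 : m d₀ ≠ m d₁ := by rw [← e01]; exact missCol_alpha_ne M col hrb d₀
  have P12 : m d₁ ≠ m d₂ := by rw [← e12]; exact missCol_alpha_ne M col hrb d₁
  have P23 : m d₂ ≠ m d₃ := by rw [← e23]; exact missCol_alpha_ne M col hrb d₂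
  have P30 : m d₃ ≠ m d₀ := by rw [← e30]; exact missCol_alpha_ne M col hrb d₃
  have c0P0 : col d₀ ≠ m d₀ := col_ne_missCol M col hrb d₀
  have c1P1 : col d₁ ≠ m d₁ := col_ne_missCol M col hrb d₁
  have c2P2 : col d₂ ≠ m d₂ := col_ne_missCol M col hrb d₂
  have c3P3 : col d₃ ≠ m d₃ := col_ne_missCol M col hrb d₃
  have c0P1 : col d₀ ≠ m d₁ := by
    rw [← e01, ← hrb.edge_consistent d₀]
    exact col_ne_missCol M col hrb (M.α d₀)
  have c1P2 : col d₁ ≠ m d₂ := by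
    rw [← e12, ← hrb.edge_consistent d₁]
    exact col_ne_missCol M col hrb (M.α d₁)
  have c2P3 : col d₂ ≠ m d₃ := by
    rw [← e23, ← hrb.edge_consistent d₂]
    exact col_ne_missCol M col hrb (M.α d₂)
  have c3P0 : col d₃ ≠ m d₀ := by
    rw [← e30, ← hrb.edge_consistent d₃]
    exact col_ne_missCol M col hrb (M.α d₃)
  exact fin3_key (col d₀) (col d₁) (col d₂) (col d₃) (m d₀) (m d₁) (m d₂) (m d₃)
    P01 P12 P23 P30 c0P0 c0P1 c1P1 c1P2 c2P2 c2P3 c3P3 c3P0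
end

section
/- Let Δ be an Eulerian triangulation with a rainbow partition of its edges into three colors, and let δ be a separating triangle of Δ (a 3-cycle that is not a face). Then the three edges of δ have three distinct colors. -/
open Equiv

private lemma fin3_aux : ∀ (a₀ b₀ c₀ a₁ b₁ c₁ a₂ b₂ c₂ : Fin 3),
    b₀ ≠ a₀ → c₀ ≠ a₀ → b₀ ≠ c₀ →
    b₁ ≠ a₁ → c₁ ≠ a₁ → b₁ ≠ c₁ →
    b₂ ≠ a₂ → c₂ ≠ a₂ → b₂ ≠ c₂ →
    ((a₁ = a₀ ∧ b₁ = c₀) ∨ (a₁ = c₀ ∧ b₁ = a₀)) →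
    ((a₂ = a₁ ∧ b₂ = c₁) ∨ (a₂ = c₁ ∧ b₂ = a₁)) →
    ((a₀ = a₂ ∧ b₀ = c₂) ∨ (a₀ = c₂ ∧ b₀ = a₂)) →
    a₀ ≠ a₁ ∧ a₁ ≠ a₂ ∧ a₀ ≠ a₂ := by decide

private lemma same_vertex_colors (M : Orth.PlaneGraph) (col : M.D → Fin 3)
    (hrb : M.IsRainbow col) (e e' : M.D) (h : M.vertexOf e = M.vertexOf e') :
    (col e' = col e ∧ col (M.σ e') = col (M.σ e)) ∨
    (col e' = col (M.σ e) ∧ col (M.σ e') = col e) := by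
  have : Finite M.D := M.fin
  have hsc : M.σ.SameCycle e e' := Quotient.exact h
  obtain ⟨m, -, hm⟩ := hsc.exists_pow_eq'
  have key : ∀ k : ℕ, (col ((M.σ ^ k) e) = col e ∧ col (M.σ ((M.σ ^ k) e)) = col (M.σ e)) ∨
      (col ((M.σ ^ k) e) = col (M.σ e) ∧ col (M.σ ((M.σ ^ k) e)) = col e) := by
    intro k
    induction k with
    | zero => left; simp
    | succ n ih =>
      have hx : (M.σ ^ (n + 1)) e = M.σ ((M.σ ^ n) e) := by
        rw [pow_succ']; rfl
      rw [hx]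
      have hper := hrb.alt_per ((M.σ ^ n) e)
      rcases ih with ⟨h1, h2⟩ | ⟨h1, h2⟩
      · right; exact ⟨h2, hper.trans h1⟩
      · left; exact ⟨h2, hper.trans h1⟩
  rw [← hm]
  exact key m

/-- Let Δ be an Eulerian triangulation with a rainbow partition of its
edges into three colors, and let δ be a separating triangle of Δ (a 3-cycle that is not
a face). Then the three edges of δ have three distinct colors. -/
theorem stmt13 (M : Orth.PlaneGraph) (hs : M.Simple) (hk : 4 ≤ Nat.card M.Vset)
    (htri : ∀ f : M.Fc, M.faceLen f = 3)
    (heven : ∀ v : M.Vset, Even (M.degree v))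
    (col : M.D → Fin 3) (hrb : M.IsRainbow col)
    (d₀ d₁ d₂ : M.D)
    (h01 : M.vertexOf (M.α d₀) = M.vertexOf d₁)
    (h12 : M.vertexOf (M.α d₁) = M.vertexOf d₂)
    (h20 : M.vertexOf (M.α d₂) = M.vertexOf d₀)
    (hdist : [M.vertexOf d₀, M.vertexOf d₁, M.vertexOf d₂].Nodup)
    (hsep : ¬ ∃ f : M.Fc,
      M.eOnFace (M.edgeOf d₀) f ∧ M.eOnFace (M.edgeOf d₁) f ∧ M.eOnFace (M.edgeOf d₂) f) :
    col d₀ ≠ col d₁ ∧ col d₁ ≠ col d₂ ∧ col d₀ ≠ col d₂ := by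
  have s₀ := same_vertex_colors M col hrb (M.α d₀) d₁ h01
  have s₁ := same_vertex_colors M col hrb (M.α d₁) d₂ h12
  have s₂ := same_vertex_colors M col hrb (M.α d₂) d₀ h20
  rw [hrb.edge_consistent d₀] at s₀
  rw [hrb.edge_consistent d₁] at s₁
  rw [hrb.edge_consistent d₂] at s₂
  have c₀a : col (M.σ (M.α d₀)) ≠ col d₀ := by
    have := hrb.alt_ne (M.α d₀); rwa [hrb.edge_consistent d₀] at this
  have c₁a : col (M.σ (M.α d₁)) ≠ col d₁ := by
    have := hrb.alt_ne (M.α d₁); rwa [hrb.edge_consistent d₁] at this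
  have c₂a : col (M.σ (M.α d₂)) ≠ col d₂ := by
    have := hrb.alt_ne (M.α d₂); rwa [hrb.edge_consistent d₂] at this
  exact fin3_aux (col d₀) (col (M.σ d₀)) (col (M.σ (M.α d₀)))
    (col d₁) (col (M.σ d₁)) (col (M.σ (M.α d₁)))
    (col d₂) (col (M.σ d₂)) (col (M.σ (M.α d₂)))
    (hrb.alt_ne d₀) c₀a (hrb.adj_pairs d₀)
    (hrb.alt_ne d₁) c₁a (hrb.adj_pairs d₁)
    (hrb.alt_ne d₂) c₂a (hrb.adj_pairs d₂)
    s₀ s₁ s₂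
end
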